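/- Let 2v be an even positive divisor of n with v ≥ 2, T ⊆ {x, x², ..., x^{2v−1}}, and X = T·⟨x^{2v}⟩ ⊆ C_n such that the multiset X ⊎ X^{(−1)} equals (C_n \ ⟨x^{2v}⟩) ⊎ x^v⟨x^{2v}⟩ and X ∪ x^v·X = C_n. Then Dih(n,X,X) is a directed strongly regular graph with parameters (2n, n, n/2 + l', n/2 − l', n/2 + l'), where l' = n/(2v). -/

import Mathlib

open scoped Classical

noncomputable def adjMat {V : Type*} [Fintype V] (r : V → V → Prop) : Matrix V V ℤ :=
  Matrix.of fun i j => if r i j then 1 else 0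

noncomputable def allOnes (V : Type*) [Fintype V] : Matrix V V ℤ :=
  Matrix.of fun _ _ => 1

/-- `r` is (the adjacency relation of) a directed strongly regular graph with
parameters `(n, k, μ, lam, t)`. -/
def IsDSRG {V : Type*} [Fintype V] [DecidableEq V] (r : V → V → Prop)
    (n k μ lam t : ℤ) : Prop :=
  (∀ i, ¬ r i i) ∧ ((Fintype.card V : ℤ) = n) ∧
  allOnes V * adjMat r = k • allOnes V ∧
  adjMat r * allOnes V = k • allOnes V ∧
  adjMat r * adjMat r =
    t • (1 : Matrix V V ℤ) + lam • adjMat r + μ • (allOnes V - 1 - adjMat r)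

/-- The Cayley digraph relation of `S ⊆ G`: `g → h` iff `g⁻¹ * h ∈ S`. -/
def cayleyRel {G : Type*} [Group G] (S : Finset G) : G → G → Prop :=
  fun g h => g⁻¹ * h ∈ S

/-- The connection set `X ∪ Yτ ⊆ D_n`, with `C_n` realized additively as `ZMod n`,
`x^a` as `DihedralGroup.r a` and `τ = DihedralGroup.sr 0`. -/
noncomputable def dihSet (n : ℕ) (X Y : Finset (ZMod n)) : Finset (DihedralGroup n) :=
  X.image DihedralGroup.r ∪ Y.image (fun a => DihedralGroup.r a * DihedralGroup.sr 0)

/-- `X̄`, the sum of the elements of `X` in the group ring `ℤ[C_n]`. -/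
noncomputable def fbar {n : ℕ} (X : Finset (ZMod n)) : AddMonoidAlgebra ℤ (ZMod n) :=
  ∑ a ∈ X, AddMonoidAlgebra.single a 1

/-- `X^{(−1)}‾`, the sum of the inverses of the elements of `X` in `ℤ[C_n]`. -/
noncomputable def fbarInv {n : ℕ} (X : Finset (ZMod n)) : AddMonoidAlgebra ℤ (ZMod n) :=
  ∑ a ∈ X, AddMonoidAlgebra.single (-a) 1

/-- `C̄_n`, the sum of all elements of `C_n` in `ℤ[C_n]`. -/
noncomputable def cbar (n : ℕ) [NeZero n] : AddMonoidAlgebra ℤ (ZMod n) :=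
  ∑ a : ZMod n, AddMonoidAlgebra.single a 1

/-- Construction. Let `2v` be an even positive divisor of `n` with `v ≥ 2`,
`T ⊆ {x,…,x^{2v−1}}` and `X = T·⟨x^{2v}⟩` such that the multiset `X ⊎ X^{(−1)}` equals
`(C_n \ ⟨x^{2v}⟩) ⊎ x^v⟨x^{2v}⟩` and `X ∪ x^v·X = C_n`. Then `Dih(n,X,X)` is a DSRG
with parameters `(2n, n, n/2 + l', n/2 − l', n/2 + l')` where `l' = n/(2v)`.
Here `H` is the subgroup `⟨x^{2v}⟩` of `C_n`, as a finset. -/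
theorem construction_even (n v : ℕ) [NeZero n] (hv : 2 * v ∣ n) (hv2 : 2 ≤ v)
    (T : Finset ℕ) (hT : ∀ a ∈ T, 1 ≤ a ∧ a < 2 * v)
    (H : Finset (ZMod n))
    (hH : H = (Finset.range (n / (2 * v))).image (fun j : ℕ => ((j * (2 * v) : ℕ) : ZMod n)))
    (X : Finset (ZMod n))
    (hX : X = (T ×ˢ Finset.range (n / (2 * v))).image
      (fun p : ℕ × ℕ => ((p.1 + p.2 * (2 * v) : ℕ) : ZMod n)))
    (hmul : X.val + X.val.map (fun a => -a) =
      (Finset.univ \ H).val + H.val.map (fun a => (v : ZMod n) + a))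
    (hcover : X ∪ X.image (fun a => (v : ZMod n) + a) = Finset.univ) :
    IsDSRG (cayleyRel (dihSet n X X)) (2 * (n : ℤ)) (n : ℤ)
      ((n : ℤ) / 2 + (n / (2 * v) : ℕ))
      ((n : ℤ) / 2 - (n / (2 * v) : ℕ))
      ((n : ℤ) / 2 + (n / (2 * v) : ℕ)) := by
  classical
  set S := dihSet n X X with hS
  set l := n / (2 * v) with hldef
  have h2v : 0 < 2 * v := by omega
  have hn0 : 0 < n := Nat.pos_of_ne_zero (NeZero.ne n)
  have hnl : l * (2 * v) = n := Nat.div_mul_cancel hv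
  have hl0 : 0 < l := by
    rcases Nat.eq_zero_or_pos l with h | h
    · rw [h, zero_mul] at hnl; omega
    · exact h
  -- reduction mod l
  have red : ∀ k : ℕ, ((k * (2 * v) : ℕ) : ZMod n) = (((k % l) * (2 * v) : ℕ) : ZMod n) := by
    intro k
    have e : k * (2 * v) = (k / l) * n + (k % l) * (2 * v) := by
      conv_lhs => rw [← Nat.div_add_mod k l]
      rw [← hnl]; ring
    rw [e]
    push_cast
    simp [ZMod.natCast_self]
  have memH : ∀ z : ZMod n, z ∈ H ↔ ∃ k : ℕ, z = ((k * (2 * v) : ℕ) : ZMod n) := by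
    intro z
    rw [hH]
    simp only [Finset.mem_image, Finset.mem_range]
    constructor
    · rintro ⟨j, _, rfl⟩; exact ⟨j, rfl⟩
    · rintro ⟨k, rfl⟩
      exact ⟨k % l, Nat.mod_lt _ hl0, (red k).symm⟩
  have memX : ∀ z : ZMod n, z ∈ X ↔ ∃ t ∈ T, ∃ k : ℕ, z = ((t + k * (2 * v) : ℕ) : ZMod n) := by
    intro z
    rw [hX]
    simp only [Finset.mem_image, Finset.mem_product, Finset.mem_range, Prod.exists]
    constructor
    · rintro ⟨t, k, ⟨ht, _⟩, rfl⟩; exact ⟨t, ht, k, rfl⟩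
    · rintro ⟨t, ht, k, rfl⟩
      refine ⟨t, k % l, ⟨ht, Nat.mod_lt _ hl0⟩, ?_⟩
      have h1 : ((t + k * (2 * v) : ℕ) : ZMod n)
          = (t : ZMod n) + ((k * (2 * v) : ℕ) : ZMod n) := by push_cast; ring
      have h2 : ((t + (k % l) * (2 * v) : ℕ) : ZMod n)
          = (t : ZMod n) + (((k % l) * (2 * v) : ℕ) : ZMod n) := by push_cast; ring
      rw [h1, h2, red k]
  have H_neg : ∀ z ∈ H, -z ∈ H := by
    intro z hz
    obtain ⟨k, rfl⟩ := (memH z).1 hz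
    refine (memH _).2 ⟨l - k % l, ?_⟩
    have hk : k % l < l := Nat.mod_lt _ hl0
    rw [red k]
    have hsum : k % l * (2 * v) + (l - k % l) * (2 * v) = n := by
      rw [← add_mul, Nat.add_sub_cancel' (le_of_lt hk), hnl]
    have h1 : (((k % l) * (2 * v) : ℕ) : ZMod n) + (((l - k % l) * (2 * v) : ℕ) : ZMod n) = 0 := by
      rw [← Nat.cast_add, hsum, ZMod.natCast_self]
    exact neg_eq_of_add_eq_zero_right h1
  have X_add_H : ∀ a ∈ X, ∀ h ∈ H, a + h ∈ X := by
    intro a ha h hh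
    obtain ⟨t, ht, k, rfl⟩ := (memX a).1 ha
    obtain ⟨k', rfl⟩ := (memH h).1 hh
    refine (memX _).2 ⟨t, ht, k + k', ?_⟩
    push_cast; ring
  have X_sub_H : ∀ a ∈ X, ∀ h ∈ H, a - h ∈ X := by
    intro a ha h hh
    rw [sub_eq_add_neg]; exact X_add_H a ha _ (H_neg h hh)
  haveI : NeZero (2 * v) := ⟨by omega⟩
  have X_zero : (0 : ZMod n) ∉ X := by
    intro h0
    obtain ⟨t, ht, k, hk⟩ := (memX 0).1 h0
    have := congrArg (ZMod.castHom hv (ZMod (2 * v))) hk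
    rw [map_zero, map_natCast, Nat.cast_add, Nat.cast_mul, ZMod.natCast_self, mul_zero,
      add_zero] at this
    have hval : ((t : ZMod (2 * v))).val = t := ZMod.val_cast_of_lt (hT t ht).2
    rw [← this] at hval
    simp only [ZMod.val_zero] at hval
    have := (hT t ht).1
    omega
  have cardH : H.card = l := by
    rw [hH, Finset.card_image_of_injOn, Finset.card_range]
    intro i hi j hj hij
    simp only [Finset.coe_range, Set.mem_Iio] at hi hj
    have key : ∀ m : ℕ, m < l → m * (2 * v) < n := by
      intro m hm
      have : (m + 1) * (2 * v) ≤ l * (2 * v) := Nat.mul_le_mul_right _ hm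
      rw [add_mul, one_mul] at this; omega
    have h1 := ZMod.val_cast_of_lt (key i hi)
    have h2 := ZMod.val_cast_of_lt (key j hj)
    have : i * (2 * v) = j * (2 * v) := by
      rw [← h1, ← h2]
      exact congrArg ZMod.val hij
    exact Nat.eq_of_mul_eq_mul_right h2v this
  have cardX2 : X.card + X.card = n := by
    have hc := congrArg Multiset.card hmul
    simp only [Multiset.card_add, Multiset.card_map, Finset.card_val] at hc
    have h1 : (Finset.univ \ H).card = n - H.card := by
      rw [Finset.card_sdiff_of_subset (Finset.subset_univ H), Finset.card_univ, ZMod.card]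
    have h2 : H.card ≤ n := by
      rw [cardH]
      have : l ≤ l * (2 * v) := Nat.le_mul_of_pos_right l h2v
      omega
    omega
  have himgcard : (X.image (fun a => (v : ZMod n) + a)).card = X.card :=
    Finset.card_image_of_injective _ (add_right_injective _)
  have hdisjX : ∀ c : ZMod n, c ∈ X → c ∈ X.image (fun a => (v : ZMod n) + a) → False := by
    have hint : (X ∩ X.image (fun a => (v : ZMod n) + a)).card = 0 := by
      have := Finset.card_union_add_card_inter X (X.image (fun a => (v : ZMod n) + a))
      rw [hcover, Finset.card_univ, ZMod.card, himgcard] at this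
      omega
    intro c h1 h2
    have hmem : c ∈ X ∩ X.image (fun a => (v : ZMod n) + a) := Finset.mem_inter.2 ⟨h1, h2⟩
    rw [Finset.card_eq_zero] at hint
    rw [hint] at hmem
    exact absurd hmem (Finset.notMem_empty c)
  have compl : ∀ c : ZMod n, c - (v : ZMod n) ∈ X ↔ c ∉ X := by
    intro c
    constructor
    · intro h hc
      exact hdisjX c hc (Finset.mem_image.2 ⟨c - v, h, by ring⟩)
    · intro hc
      have hm : c ∈ X ∪ X.image (fun a => (v : ZMod n) + a) := by
        rw [hcover]; exact Finset.mem_univ c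
      rcases Finset.mem_union.1 hm with h | h
      · exact absurd h hc
      · obtain ⟨a, ha, rfl⟩ := Finset.mem_image.1 h
        simpa using ha
  have filterH : ∀ c : ZMod n, (H.filter (fun h => c - h ∈ X)).card = if c ∈ X then l else 0 := by
    intro c
    split_ifs with hc
    · rw [Finset.filter_true_of_mem fun h hh => X_sub_H c hc h hh, cardH]
    · rw [Finset.filter_false_of_mem, Finset.card_empty]
      intro h hh hX'
      apply hc
      have := X_add_H _ hX' h hh
      rwa [sub_add_cancel] at this
  have filterUniv : ∀ c : ZMod n,
      (Finset.univ.filter (fun a => c - a ∈ X)).card = X.card := by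
    intro c
    have himg : Finset.univ.filter (fun a => c - a ∈ X) = X.image (fun b => c - b) := by
      ext a
      simp only [Finset.mem_filter, Finset.mem_univ, true_and, Finset.mem_image]
      constructor
      · intro h; exact ⟨c - a, h, by ring⟩
      · rintro ⟨b, hb, rfl⟩; simpa [sub_sub_cancel] using hb
    rw [himg, Finset.card_image_of_injective _ sub_right_injective]
  have bridge : ∀ c : ZMod n,
      (X.filter (fun a => a - c ∈ X)).card = (X.filter (fun a => c + a ∈ X)).card := by
    intro c
    have himg : X.filter (fun a => a - c ∈ X)
        = (X.filter (fun a => c + a ∈ X)).image (fun a => c + a) := by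
      ext x
      simp only [Finset.mem_filter, Finset.mem_image]
      constructor
      · rintro ⟨hx, hxc⟩
        refine ⟨x - c, ⟨hxc, ?_⟩, by ring⟩
        rw [show c + (x - c) = x from by ring]; exact hx
      · rintro ⟨a, ⟨ha, hca⟩, rfl⟩
        exact ⟨hca, by rwa [show c + a - c = a from by ring]⟩
    rw [himg, Finset.card_image_of_injective _ (add_right_injective c)]
  have cf : ∀ (s : Finset (ZMod n)) (p : ZMod n → Prop) [DecidablePred p],
      s.val.countP p = (s.filter p).card := by
    intro s p _
    rw [Multiset.countP_eq_card_filter]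
    rfl
  have cf2 : ∀ (s : Finset (ZMod n)) (p : ZMod n → Prop) [DecidablePred p],
      (Multiset.filter p s.val).card = (s.filter p).card := by
    intro s p _
    rfl
  have mainZ : ∀ c : ZMod n,
      ((X.filter (fun a => c - a ∈ X)).card : ℤ) + ((X.filter (fun a => c + a ∈ X)).card : ℤ)
        = if c ∈ X then (n : ℤ) / 2 - (l : ℤ) else (n : ℤ) / 2 + (l : ℤ) := by
    intro c
    have key := congrArg (Multiset.countP (fun m => c - m ∈ X)) hmul
    rw [Multiset.countP_add, Multiset.countP_add, Multiset.countP_map, Multiset.countP_map,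
      cf, cf, cf2, cf2] at key
    have e2 : X.filter (fun a => c - -a ∈ X) = X.filter (fun a => c + a ∈ X) := by
      apply Finset.filter_congr
      intro a _
      rw [sub_neg_eq_add]
    have e3 : H.filter (fun a => c - ((v : ZMod n) + a) ∈ X)
        = H.filter (fun h => c - (v : ZMod n) - h ∈ X) := by
      apply Finset.filter_congr
      intro a _
      rw [show c - ((v : ZMod n) + a) = c - (v : ZMod n) - a from by ring]
    rw [e2, e3] at key
    have hsplit : (Finset.univ.filter (fun m => c - m ∈ X)).card
        = (H.filter (fun m => c - m ∈ X)).card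
          + ((Finset.univ \ H).filter (fun m => c - m ∈ X)).card := by
      rw [← Finset.card_union_of_disjoint
        (Finset.disjoint_filter_filter Finset.disjoint_sdiff),
        ← Finset.filter_union, Finset.union_sdiff_of_subset (Finset.subset_univ H)]
    have h4 := filterUniv c
    have h5 := filterH c
    have h6 := filterH (c - (v : ZMod n))
    have hhalf : (n : ℤ) / 2 = (X.card : ℤ) := by
      have : (n : ℤ) = (X.card : ℤ) + (X.card : ℤ) := by exact_mod_cast cardX2.symm
      omega
    rw [hhalf]
    by_cases hc : c ∈ X
    · rw [if_pos hc]
      rw [if_pos hc] at h5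
      rw [if_neg (fun hcv => ((compl c).1 hcv) hc)] at h6
      omega
    · rw [if_neg hc]
      rw [if_neg hc] at h5
      rw [if_pos ((compl c).2 hc)] at h6
      omega
  -- dihedral bookkeeping
  have inv_r : ∀ a : ZMod n, (DihedralGroup.r a)⁻¹ = DihedralGroup.r (-a) := fun _ => rfl
  have inv_sr : ∀ a : ZMod n, (DihedralGroup.sr a)⁻¹ = DihedralGroup.sr a := fun _ => rfl
  have memS_r : ∀ z : ZMod n, DihedralGroup.r z ∈ S ↔ z ∈ X := by
    intro z
    simp [hS, dihSet, DihedralGroup.r_mul_sr, zero_sub]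
  have memS_sr : ∀ z : ZMod n, DihedralGroup.sr z ∈ S ↔ -z ∈ X := by
    intro z
    simp only [hS, dihSet, Finset.mem_union, Finset.mem_image, DihedralGroup.r_mul_sr, zero_sub]
    constructor
    · rintro (⟨a, _, h⟩ | ⟨a, ha, h⟩)
      · exact absurd h (by simp)
      · obtain rfl : a = -z := by
          have h' : -a = z := by injection h
          rw [← h', neg_neg]
        exact ha
    · intro hz
      exact Or.inr ⟨-z, hz, by rw [neg_neg]⟩
  have hrinj : Function.Injective (DihedralGroup.r (n := n)) := fun a b h => by
    injection h
  have hsrinj : Function.Injective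
      (fun a : ZMod n => DihedralGroup.r a * DihedralGroup.sr 0) := by
    intro a b h
    have := mul_right_cancel h
    injection this
  have hdisjRS : ∀ Y Z : Finset (ZMod n),
      Disjoint (Y.image DihedralGroup.r)
        (Z.image (fun a => DihedralGroup.r a * DihedralGroup.sr 0)) := by
    intro Y Z
    rw [Finset.disjoint_left]
    rintro x hx1 hx2
    obtain ⟨a, _, rfl⟩ := Finset.mem_image.1 hx1
    obtain ⟨b, _, hb⟩ := Finset.mem_image.1 hx2
    rw [DihedralGroup.r_mul_sr] at hb
    exact absurd hb (by simp)
  have cardS : S.card = n := by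
    rw [hS, dihSet, Finset.card_union_of_disjoint (hdisjRS X X),
      Finset.card_image_of_injective _ hrinj, Finset.card_image_of_injective _ hsrinj]
    omega
  have h1S : (1 : DihedralGroup n) ∉ S := by
    intro h
    exact X_zero ((memS_r 0).1 h)
  have filterS : ∀ c : ZMod n,
      S.filter (fun u => u⁻¹ * DihedralGroup.r c ∈ S)
        = (X.filter (fun a => c - a ∈ X)).image DihedralGroup.r
          ∪ (X.filter (fun a => a - c ∈ X)).image
              (fun a => DihedralGroup.r a * DihedralGroup.sr 0) := by
    intro c
    ext u
    obtain b | b := u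
    · simp only [Finset.mem_filter, Finset.mem_union, Finset.mem_image, Finset.mem_filter,
        inv_r, DihedralGroup.r_mul_r, DihedralGroup.r_mul_sr, memS_r, zero_sub]
      constructor
      · rintro ⟨hb, hbc⟩
        left
        exact ⟨b, ⟨hb, by rwa [neg_add_eq_sub] at hbc⟩, rfl⟩
      · rintro (⟨a, ⟨ha, hac⟩, h⟩ | ⟨a, _, h⟩)
        · obtain rfl : a = b := by injection h
          exact ⟨ha, by rwa [neg_add_eq_sub]⟩
        · exact absurd h (by simp)
    · simp only [Finset.mem_filter, Finset.mem_union, Finset.mem_image, Finset.mem_filter,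
        inv_sr, DihedralGroup.sr_mul_r, DihedralGroup.r_mul_sr, memS_sr, zero_sub]
      constructor
      · rintro ⟨hb, hbc⟩
        right
        refine ⟨-b, ⟨hb, ?_⟩, by rw [neg_neg]⟩
        rw [show -b - c = -(b + c) from by ring]; exact hbc
      · rintro (⟨a, _, h⟩ | ⟨a, ⟨ha, hac⟩, h⟩)
        · exact absurd h (by simp)
        · obtain rfl : a = -b := by
            have : -a = b := by injection h
            rw [← this, neg_neg]
          refine ⟨ha, ?_⟩
          rw [show -(b + c) = -b - c from by ring]
          exact hac
  have filterS' : ∀ c : ZMod n,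
      S.filter (fun u => u⁻¹ * DihedralGroup.sr c ∈ S)
        = (X.filter (fun a => -c - a ∈ X)).image DihedralGroup.r
          ∪ (X.filter (fun a => a - (-c) ∈ X)).image
              (fun a => DihedralGroup.r a * DihedralGroup.sr 0) := by
    intro c
    ext u
    obtain b | b := u
    · simp only [Finset.mem_filter, Finset.mem_union, Finset.mem_image, Finset.mem_filter,
        inv_r, DihedralGroup.r_mul_sr, memS_r, memS_sr, zero_sub, sub_neg_eq_add]
      constructor
      · rintro ⟨hb, hbc⟩
        left
        refine ⟨b, ⟨hb, ?_⟩, rfl⟩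
        rw [show -c - b = -(c + b) from by ring]; exact hbc
      · rintro (⟨a, ⟨ha, hac⟩, h⟩ | ⟨a, _, h⟩)
        · obtain rfl : a = b := by injection h
          rw [show -(c + a) = -c - a from by ring]
          exact ⟨ha, hac⟩
        · exact absurd h (by simp)
    · simp only [Finset.mem_filter, Finset.mem_union, Finset.mem_image, Finset.mem_filter,
        inv_sr, DihedralGroup.sr_mul_sr, DihedralGroup.r_mul_sr, memS_r, memS_sr, zero_sub]
      constructor
      · rintro ⟨hb, hbc⟩
        right
        refine ⟨-b, ⟨hb, ?_⟩, by rw [neg_neg]⟩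
        rw [show -b - -c = c - b from by ring]
        exact hbc
      · rintro (⟨a, _, h⟩ | ⟨a, ⟨ha, hac⟩, h⟩)
        · exact absurd h (by simp)
        · obtain rfl : a = -b := by
            have h' : -a = b := by injection h
            rw [← h', neg_neg]
          refine ⟨ha, ?_⟩
          rw [show c - b = -b - -c from by ring]
          exact hac
  have Ncount : ∀ d : DihedralGroup n,
      ((S.filter (fun u => u⁻¹ * d ∈ S)).card : ℤ)
        = if d ∈ S then (n : ℤ) / 2 - (l : ℤ) else (n : ℤ) / 2 + (l : ℤ) := by
    intro d
    obtain c | c := d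
    · rw [filterS c, Finset.card_union_of_disjoint (hdisjRS _ _),
        Finset.card_image_of_injective _ hrinj, Finset.card_image_of_injective _ hsrinj,
        bridge c]
      simp only [memS_r]
      push_cast
      exact mainZ c
    · rw [filterS' c, Finset.card_union_of_disjoint (hdisjRS _ _),
        Finset.card_image_of_injective _ hrinj, Finset.card_image_of_injective _ hsrinj,
        bridge (-c)]
      simp only [memS_sr]
      push_cast
      exact mainZ (-c)
  have colsum : ∀ j : DihedralGroup n,
      (∑ x : DihedralGroup n, if x⁻¹ * j ∈ S then (1 : ℤ) else 0) = (n : ℤ) := by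
    intro j
    have heq := Equiv.sum_comp ((Equiv.inv (DihedralGroup n)).trans (Equiv.mulRight j))
      (fun u => if u ∈ S then (1 : ℤ) else 0)
    simp only [Equiv.trans_apply, Equiv.inv_apply, Equiv.coe_mulRight] at heq
    rw [heq, Finset.sum_boole]
    simp [cardS]
  have rowsum : ∀ i : DihedralGroup n,
      (∑ x : DihedralGroup n, if i⁻¹ * x ∈ S then (1 : ℤ) else 0) = (n : ℤ) := by
    intro i
    have heq := Equiv.sum_comp (Equiv.mulLeft i) (fun u => if i⁻¹ * u ∈ S then (1 : ℤ) else 0)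
    simp only [Equiv.coe_mulLeft, inv_mul_cancel_left] at heq
    rw [← heq, Finset.sum_boole]
    simp [cardS]
  have quadsum : ∀ i j : DihedralGroup n,
      (∑ k : DihedralGroup n,
        (if i⁻¹ * k ∈ S then (1 : ℤ) else 0) * (if k⁻¹ * j ∈ S then (1 : ℤ) else 0))
        = if i⁻¹ * j ∈ S then (n : ℤ) / 2 - (l : ℤ) else (n : ℤ) / 2 + (l : ℤ) := by
    intro i j
    simp only [ite_mul, one_mul, zero_mul, ← ite_and]
    have e2 := Equiv.sum_comp (Equiv.mulLeft i)
      (fun k => if i⁻¹ * k ∈ S ∧ k⁻¹ * j ∈ S then (1 : ℤ) else 0)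
    simp only [Equiv.coe_mulLeft] at e2
    rw [← e2]
    simp only [inv_mul_cancel_left, mul_inv_rev, mul_assoc]
    rw [Finset.sum_boole]
    have e4 : Finset.univ.filter (fun u => u ∈ S ∧ u⁻¹ * (i⁻¹ * j) ∈ S)
        = S.filter (fun u => u⁻¹ * (i⁻¹ * j) ∈ S) := by
      ext u
      simp
    rw [e4, Ncount (i⁻¹ * j)]
  refine ⟨?_, ?_, ?_, ?_, ?_⟩
  · intro i hi
    have h' : i⁻¹ * i ∈ S := hi
    rw [inv_mul_cancel] at h'
    exact h1S h'
  · rw [DihedralGroup.card]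
    push_cast
    ring
  · ext i j
    simp only [Matrix.mul_apply, allOnes, adjMat, Matrix.of_apply, one_mul,
      Matrix.smul_apply, smul_eq_mul, mul_one, cayleyRel]
    exact Eq.trans (Finset.sum_congr rfl fun x _ => by split_ifs with h <;> simp [h]) (colsum j)
  · ext i j
    simp only [Matrix.mul_apply, allOnes, adjMat, Matrix.of_apply, mul_one,
      Matrix.smul_apply, smul_eq_mul, cayleyRel]
    exact Eq.trans (Finset.sum_congr rfl fun x _ => by split_ifs with h <;> simp [h]) (rowsum i)
  · ext i j
    simp only [Matrix.mul_apply, Matrix.add_apply, Matrix.sub_apply, Matrix.smul_apply,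
      Matrix.one_apply, adjMat, allOnes, Matrix.of_apply, smul_eq_mul, cayleyRel]
    refine Eq.trans (b := if i⁻¹ * j ∈ S then (n : ℤ) / 2 - (l : ℤ) else (n : ℤ) / 2 + (l : ℤ))
      (Eq.trans (Finset.sum_congr rfl fun k _ => by split_ifs with h <;> simp [h] <;> congr) (quadsum i j)) ?_
    by_cases hd : i⁻¹ * j ∈ S
    · have hij : ¬ i = j := by
        rintro rfl
        rw [inv_mul_cancel] at hd
        exact h1S hd
      simp only [hd, hij, if_true, if_false, ite_true, ite_false]
      ring
    · by_cases hij : i = j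
      · subst hij
        have h1 : ((1 : DihedralGroup n) ∈ S) = False := eq_false h1S
        simp only [inv_mul_cancel, h1, if_false, ite_false, if_true, ite_true]
        ring
      · simp only [hd, hij, if_true, if_false, ite_true, ite_false]
        ring
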